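/- The map F₁(x,y) = (x²+y, y²+x, xy) from ℂ² to ℂ³ has exactly three singular points, namely (ε/2, ε²/2) for each cube root of unity ε, where a singular point is a point at which all three 2×2 minors of the Jacobian matrix vanish. -/

import Mathlib

open Complex

/-- The components of `F₁(x,y) = (x²+y, y²+x, xy)`. -/
noncomputable def F1c1 (p : ℂ × ℂ) : ℂ := p.1 ^ 2 + p.2
noncomputable def F1c2 (p : ℂ × ℂ) : ℂ := p.2 ^ 2 + p.1
noncomputable def F1c3 (p : ℂ × ℂ) : ℂ := p.1 * p.2

/-- The 2×2 Jacobian minor `det ∂(g,h)/∂(x,y)` at a point `p`. -/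
noncomputable def Jminor (g h : ℂ × ℂ → ℂ) (p : ℂ × ℂ) : ℂ :=
  deriv (fun t => g (t, p.2)) p.1 * deriv (fun t => h (p.1, t)) p.2 -
    deriv (fun t => g (p.1, t)) p.2 * deriv (fun t => h (t, p.2)) p.1

lemma J23 (p : ℂ × ℂ) : Jminor F1c2 F1c3 p = p.1 - 2 * p.2 ^ 2 := by
  simp only [Jminor, F1c2, F1c3]
  rw [deriv_const_add, deriv_id'', deriv_const_mul_field, deriv_id'',
    deriv_add_const, deriv_pow_field, deriv_mul_const_field, deriv_id'']
  ring

lemma J31 (p : ℂ × ℂ) : Jminor F1c3 F1c1 p = p.2 - 2 * p.1 ^ 2 := by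
  simp only [Jminor, F1c3, F1c1]
  rw [deriv_mul_const_field, deriv_id'', deriv_const_add, deriv_id'',
    deriv_const_mul_field, deriv_id'', deriv_add_const, deriv_pow_field]
  ring

lemma J12 (p : ℂ × ℂ) : Jminor F1c1 F1c2 p = 4 * p.1 * p.2 - 1 := by
  simp only [Jminor, F1c1, F1c2]
  rw [deriv_add_const, deriv_pow_field, deriv_add_const, deriv_pow_field,
    deriv_const_add, deriv_id'', deriv_const_add, deriv_id'']
  ring
/-- The singular points of `F₁ = (x²+y, y²+x, xy)` are exactly the points
`(ε/2, ε²/2)` with `ε³ = 1`. -/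
theorem stmt0 (p : ℂ × ℂ) :
    (Jminor F1c2 F1c3 p = 0 ∧ Jminor F1c3 F1c1 p = 0 ∧ Jminor F1c1 F1c2 p = 0) ↔
      ∃ ε : ℂ, ε ^ 3 = 1 ∧ p = (ε / 2, ε ^ 2 / 2) := by
  rw [J23, J31, J12]
  constructor
  · rintro ⟨h1, h2, h3⟩
    refine ⟨2 * p.1, ?_, ?_⟩
    · linear_combination -4 * p.1 * h2 + h3
    · have hx : p.1 = 2 * p.1 / 2 := by ring
      have hy : p.2 = (2 * p.1) ^ 2 / 2 := by linear_combination h2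
      exact Prod.ext hx hy
  · rintro ⟨ε, hε, rfl⟩
    refine ⟨?_, ?_, ?_⟩
    · simp only
      linear_combination (-ε / 2) * hε
    · simp only
      ring
    · simp only
      linear_combination hε
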